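/- For any Shapley-Scarf market (with arbitrary weak preferences) and any tie-breaking profile ≻, the allocation TTC_≻(R) is in the weak core; in particular the weak core of any such market is non-empty. -/

import Mathlib

open scoped Classical

namespace ShapleyScarf

/-- A weak preference relation: complete (total) and transitive, hence reflexive. -/
structure WeakOrder (H : Type*) where
  rel : H → H → Prop
  total : ∀ a b, rel a b ∨ rel b a
  trans : ∀ a b c, rel a b → rel b c → rel a c

namespace WeakOrder
variable {H : Type*}
/-- Strict part `P` of a weak preference. -/
def P (R : WeakOrder H) (a b : H) : Prop := R.rel a b ∧ ¬ R.rel b a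
/-- Indifference part `I` of a weak preference. -/
def I (R : WeakOrder H) (a b : H) : Prop := R.rel a b ∧ R.rel b a
end WeakOrder

/-- `lt` is a strict linear order on agents (a tie-breaking order). -/
def IsTieBreak {n : ℕ} (lt : Fin n → Fin n → Prop) : Prop :=
  (∀ a b, a ≠ b → lt a b ∨ lt b a) ∧ Transitive lt ∧ ∀ a, ¬ lt a a

section Defs
variable {n : ℕ} {H : Type*} {B : Type*}

/-- Strict part of the tie-broken preference `P_{i,≻}`: `a` above `b` iff
`a P b`, or `a I b` and the owner of `a` comes before the owner of `b` in `≻_i`. -/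
def tieBroken (w : Fin n ≃ H) (R : WeakOrder H) (lt : Fin n → Fin n → Prop) (a b : H) : Prop :=
  R.P a b ∨ (R.I a b ∧ lt (w.symm a) (w.symm b))

/-- The weak tie-broken relation `R_{i,≻}` (reflexive closure of the strict part). -/
def tieBrokenWeak (w : Fin n ≃ H) (R : WeakOrder H) (lt : Fin n → Fin n → Prop)
    (a b : H) : Prop :=
  a = b ∨ tieBroken w R lt a b

/-- The owner (in `S`) of the `pref`-best house among the endowments of the
remaining agents `S`; the agent with this endowment is whom `i` points at. -/
noncomputable def point (w : Fin n ≃ H) (pref : H → H → Prop) (S : Finset (Fin n))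
    (i : Fin n) : Fin n :=
  if h : (S.filter fun m => ∀ j ∈ S, j = m ∨ pref (w m) (w j)).Nonempty then
    (S.filter fun m => ∀ j ∈ S, j = m ∨ pref (w m) (w j)).min' h
  else i

/-- The agents of `S` lying on some trading cycle of the pointing map. -/
noncomputable def cycleAgents (w : Fin n ≃ H) (pref : Fin n → H → H → Prop)
    (S : Finset (Fin n)) : Finset (Fin n) :=
  S.filter fun i => ∃ k, 0 < k ∧ (fun j => point w (pref j) S j)^[k] i = i

/-- Top trading cycles on strict preferences, fuel-based recursion: in each round all
current trading cycles are executed and their agents removed. -/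
noncomputable def TTCaux (w : Fin n ≃ H) (pref : Fin n → H → H → Prop) :
    ℕ → Finset (Fin n) → Fin n → H
  | 0, _, i => w i
  | fuel + 1, S, i =>
      if i ∈ cycleAgents w pref S then w (point w (pref i) S i)
      else TTCaux w pref fuel (S \ cycleAgents w pref S) i

/-- Gale's top trading cycles algorithm for a strict preference profile. -/
noncomputable def TTCstrict (w : Fin n ≃ H) (pref : Fin n → H → H → Prop) : Fin n → H :=
  TTCaux w pref n Finset.univ

/-- Round (executed-cycle index, starting from 1) at which an agent is assigned. -/
noncomputable def TTCroundAux (w : Fin n ≃ H) (pref : Fin n → H → H → Prop) :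
    ℕ → Finset (Fin n) → Fin n → ℕ
  | 0, _, _ => 1
  | fuel + 1, S, i =>
      if i ∈ cycleAgents w pref S then 1
      else TTCroundAux w pref fuel (S \ cycleAgents w pref S) i + 1

/-- TTC with fixed tie-breaking: `TTC_≻(R) = TTC(R_≻)`. -/
noncomputable def TTCtb (w : Fin n ≃ H) (R : Fin n → WeakOrder H)
    (tb : Fin n → Fin n → Fin n → Prop) : Fin n → H :=
  TTCstrict w fun i => tieBroken w (R i) (tb i)

/-- The round in which agent `i` is assigned under `TTC_≻(R)`. -/
noncomputable def TTCtbRound (w : Fin n ≃ H) (R : Fin n → WeakOrder H)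
    (tb : Fin n → Fin n → Fin n → Prop) (i : Fin n) : ℕ :=
  TTCroundAux w (fun a => tieBroken w (R a) (tb a)) n Finset.univ i

/-- Objective indifferences w.r.t. the partition of `H` into the fibers of `blk`:
indifference holds exactly between houses in the same block. -/
def ObjInd (blk : H → B) (R : WeakOrder H) : Prop :=
  ∀ a b, R.I a b ↔ blk a = blk b

/-- `x` is blocked: some coalition `Q` can reallocate its own endowments making
all its members weakly better off and one strictly better off. -/
def Blocks (w : Fin n ≃ H) (R : Fin n → WeakOrder H) (x : Fin n → H) : Prop :=
  ∃ (Q : Finset (Fin n)) (y : Fin n ≃ H),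
    Q.image (⇑y) = Q.image (⇑w) ∧
    (∀ i ∈ Q, (R i).rel (y i) (x i)) ∧
    ∃ i ∈ Q, (R i).P (y i) (x i)

/-- `x` is weakly blocked: some nonempty coalition can reallocate its own
endowments making all of its members strictly better off. -/
def WeaklyBlocks (w : Fin n ≃ H) (R : Fin n → WeakOrder H) (x : Fin n → H) : Prop :=
  ∃ Q : Finset (Fin n), Q.Nonempty ∧ ∃ y : Fin n ≃ H,
    Q.image (⇑y) = Q.image (⇑w) ∧ ∀ i ∈ Q, (R i).P (y i) (x i)

/-- `y` Pareto dominates `x`. -/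
def ParetoDom (R : Fin n → WeakOrder H) (y x : Fin n → H) : Prop :=
  (∀ i, (R i).rel (y i) (x i)) ∧ ∃ i, (R i).P (y i) (x i)

end Defs

section Proof
variable {n : ℕ} {H : Type*}

lemma exists_best (w : Fin n ≃ H) (p : H → H → Prop)
    (htot : ∀ a b, a ≠ b → p a b ∨ p b a) (htr : Transitive p)
    (S : Finset (Fin n)) :
    S.Nonempty → ∃ m ∈ S, ∀ j ∈ S, j = m ∨ p (w m) (w j) := by
  induction S using Finset.induction_on with
  | empty => simp
  | @insert a S ha ih =>
    intro _
    rcases S.eq_empty_or_nonempty with rfl | hS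
    · exact ⟨a, by simp, by simp⟩
    · obtain ⟨m, hm, hbest⟩ := ih hS
      have ham : a ≠ m := fun h => ha (h ▸ hm)
      have hw : w a ≠ w m := fun h => ham (w.injective h)
      rcases htot _ _ hw with hcase | hcase
      · refine ⟨a, Finset.mem_insert_self _ _, ?_⟩
        intro j hj
        rcases Finset.mem_insert.1 hj with rfl | hj
        · exact Or.inl rfl
        · rcases hbest j hj with rfl | hpj
          · exact Or.inr hcase
          · exact Or.inr (htr hcase hpj)
      · refine ⟨m, Finset.mem_insert_of_mem hm, ?_⟩
        intro j hj
        rcases Finset.mem_insert.1 hj with rfl | hj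
        · exact Or.inr hcase
        · exact hbest j hj

lemma point_spec (w : Fin n ≃ H) (p : H → H → Prop)
    (htot : ∀ a b, a ≠ b → p a b ∨ p b a) (htr : Transitive p)
    {S : Finset (Fin n)} (hS : S.Nonempty) (i : Fin n) :
    point w p S i ∈ S ∧ ∀ j ∈ S, j = point w p S i ∨ p (w (point w p S i)) (w j) := by
  obtain ⟨m, hm, hb⟩ := exists_best w p htot htr S hS
  have hne : (S.filter fun m => ∀ j ∈ S, j = m ∨ p (w m) (w j)).Nonempty :=
    ⟨m, Finset.mem_filter.2 ⟨hm, hb⟩⟩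
  have hmem := Finset.min'_mem _ hne
  rw [Finset.mem_filter] at hmem
  unfold point
  rw [dif_pos hne]
  exact hmem

/-- Good strict preference profile hypothesis. -/
def GoodPref (pref : Fin n → H → H → Prop) : Prop :=
  ∀ i, (∀ a b : H, a ≠ b → pref i a b ∨ pref i b a) ∧ Transitive (pref i)

lemma iter_mem (w : Fin n ≃ H) {pref : Fin n → H → H → Prop} (hp : GoodPref pref)
    {S : Finset (Fin n)} (hS : S.Nonempty) {i : Fin n} (hi : i ∈ S) (k : ℕ) :
    (fun j => point w (pref j) S j)^[k] i ∈ S := by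
  induction k with
  | zero => simpa
  | succ k ihk =>
    rw [Function.iterate_succ_apply']
    exact (point_spec w _ (hp _).1 (hp _).2 hS _).1

lemma cycleAgents_subset (w : Fin n ≃ H) (pref : Fin n → H → H → Prop)
    (S : Finset (Fin n)) : cycleAgents w pref S ⊆ S :=
  Finset.filter_subset _ _

lemma cycleAgents_nonempty (w : Fin n ≃ H) {pref : Fin n → H → H → Prop}
    (hp : GoodPref pref) {S : Finset (Fin n)} (hS : S.Nonempty) :
    (cycleAgents w pref S).Nonempty := by
  obtain ⟨i₀, hi₀⟩ := hS
  set f := fun j => point w (pref j) S j with hf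
  have hiter : ∀ k, f^[k] i₀ ∈ S := iter_mem w hp ⟨i₀, hi₀⟩ hi₀
  obtain ⟨a, b, hne, heq⟩ :=
    Finite.exists_ne_map_eq_of_infinite (fun k : ℕ => (⟨f^[k] i₀, hiter k⟩ : {x // x ∈ S}))
  have heq' : f^[a] i₀ = f^[b] i₀ := congrArg Subtype.val heq
  rcases hne.lt_or_gt with hab | hab
  · refine ⟨f^[a] i₀, Finset.mem_filter.2 ⟨hiter a, b - a, by omega, ?_⟩⟩
    rw [← Function.iterate_add_apply, Nat.sub_add_cancel hab.le, ← heq']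
  · refine ⟨f^[b] i₀, Finset.mem_filter.2 ⟨hiter b, a - b, by omega, ?_⟩⟩
    rw [← Function.iterate_add_apply, Nat.sub_add_cancel hab.le, heq']

lemma point_image_cycle (w : Fin n ≃ H) {pref : Fin n → H → H → Prop}
    (hp : GoodPref pref) {S : Finset (Fin n)} (hS : S.Nonempty) :
    (cycleAgents w pref S).image (fun j => point w (pref j) S j) = cycleAgents w pref S := by
  set f := fun j => point w (pref j) S j with hf
  apply Finset.Subset.antisymm
  · intro x hx
    obtain ⟨i, hi, rfl⟩ := Finset.mem_image.1 hx
    obtain ⟨hiS, k, hk, hki⟩ := Finset.mem_filter.1 hi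
    refine Finset.mem_filter.2 ⟨(point_spec w _ (hp _).1 (hp _).2 hS _).1, k, hk, ?_⟩
    have hki' : f^[k] i = i := hki
    calc f^[k] (f i) = f^[k+1] i := (Function.iterate_succ_apply f k i).symm
      _ = f (f^[k] i) := Function.iterate_succ_apply' f k i
      _ = f i := by rw [hki']
  · intro i hi
    obtain ⟨hiS, k, hk, hki⟩ := Finset.mem_filter.1 hi
    have hki' : f^[k] i = i := hki
    refine Finset.mem_image.2 ⟨f^[k-1] i, ?_, ?_⟩
    · refine Finset.mem_filter.2 ⟨iter_mem w hp hS hiS _, k, hk, ?_⟩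
      calc f^[k] (f^[k-1] i) = f^[k + (k-1)] i := (Function.iterate_add_apply f k (k-1) i).symm
        _ = f^[(k-1) + k] i := by rw [Nat.add_comm]
        _ = f^[k-1] (f^[k] i) := Function.iterate_add_apply f (k-1) k i
        _ = f^[k-1] i := by rw [hki']
    · calc f (f^[k-1] i) = f^[(k-1)+1] i := (Function.iterate_succ_apply' f (k-1) i).symm
        _ = f^[k] i := by rw [Nat.sub_add_cancel hk]
        _ = i := hki'

lemma TTCaux_succ (w : Fin n ≃ H) (pref : Fin n → H → H → Prop)
    (fuel : ℕ) (S : Finset (Fin n)) (i : Fin n) :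
    TTCaux w pref (fuel + 1) S i =
      if i ∈ cycleAgents w pref S then w (point w (pref i) S i)
      else TTCaux w pref fuel (S \ cycleAgents w pref S) i := rfl

lemma TTCaux_image (w : Fin n ≃ H) {pref : Fin n → H → H → Prop} (hp : GoodPref pref) :
    ∀ (fuel : ℕ) (S : Finset (Fin n)), S.card ≤ fuel →
      S.image (TTCaux w pref fuel S) = S.image w := by
  intro fuel
  induction fuel with
  | zero =>
    intro S hS
    rw [Finset.card_eq_zero.1 (Nat.le_zero.1 hS)]
    simp
  | succ fuel ih =>
    intro S hS
    rcases S.eq_empty_or_nonempty with rfl | hSne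
    · simp
    set C := cycleAgents w pref S with hC
    have hCS : C ⊆ S := cycleAgents_subset w pref S
    have hCne : C.Nonempty := cycleAgents_nonempty w hp hSne
    have hcard : (S \ C).card ≤ fuel := by
      rw [Finset.card_sdiff_of_subset hCS]
      have h1 : 1 ≤ C.card := Finset.card_pos.2 hCne
      have h2 : C.card ≤ S.card := Finset.card_le_card hCS
      omega
    have hsplit : C ∪ (S \ C) = S := Finset.union_sdiff_of_subset hCS
    have h1 : C.image (TTCaux w pref (fuel + 1) S) = C.image w := by
      have e1 : C.image (TTCaux w pref (fuel + 1) S)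
          = (C.image (fun j => point w (pref j) S j)).image w := by
        rw [Finset.image_image]
        apply Finset.image_congr
        intro i hi
        simp only [Function.comp_apply, TTCaux_succ]
        rw [if_pos (show i ∈ cycleAgents w pref S from hi)]
      rw [e1, point_image_cycle w hp hSne]
    have h2 : (S \ C).image (TTCaux w pref (fuel + 1) S) = (S \ C).image w := by
      have e2 : (S \ C).image (TTCaux w pref (fuel + 1) S)
          = (S \ C).image (TTCaux w pref fuel (S \ C)) := by
        apply Finset.image_congr
        intro i hi
        rw [TTCaux_succ, if_neg (Finset.mem_sdiff.1 hi).2]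
      rw [e2, ih _ hcard]
    calc S.image (TTCaux w pref (fuel + 1) S)
        = (C ∪ (S \ C)).image (TTCaux w pref (fuel + 1) S) := by rw [hsplit]
      _ = C.image (TTCaux w pref (fuel + 1) S) ∪ (S \ C).image (TTCaux w pref (fuel + 1) S) :=
          Finset.image_union _ _
      _ = C.image w ∪ (S \ C).image w := by rw [h1, h2]
      _ = (C ∪ (S \ C)).image w := (Finset.image_union _ _).symm
      _ = S.image w := by rw [hsplit]

lemma TTCaux_best (w : Fin n ≃ H) {pref : Fin n → H → H → Prop} (hp : GoodPref pref) :
    ∀ (fuel : ℕ) (S Q : Finset (Fin n)), S.card ≤ fuel → Q ⊆ S → Q.Nonempty →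
      ∃ i ∈ Q, ∀ j ∈ Q,
        TTCaux w pref fuel S i = w j ∨ pref i (TTCaux w pref fuel S i) (w j) := by
  intro fuel
  induction fuel with
  | zero =>
    intro S Q hS hQS hQ
    rw [Finset.card_eq_zero.1 (Nat.le_zero.1 hS)] at hQS
    exact absurd (Finset.subset_empty.1 hQS) (Finset.nonempty_iff_ne_empty.1 hQ)
  | succ fuel ih =>
    intro S Q hS hQS hQ
    have hSne : S.Nonempty := hQ.mono hQS
    set C := cycleAgents w pref S with hC
    have hCS : C ⊆ S := cycleAgents_subset w pref S
    have hCne : C.Nonempty := cycleAgents_nonempty w hp hSne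
    rcases (Q ∩ C).eq_empty_or_nonempty with hQC | ⟨i, hi⟩
    · have hQsub : Q ⊆ S \ C := by
        intro j hj
        refine Finset.mem_sdiff.2 ⟨hQS hj, fun hjc => ?_⟩
        exact Finset.notMem_empty j (hQC ▸ Finset.mem_inter.2 ⟨hj, hjc⟩)
      have hcard : (S \ C).card ≤ fuel := by
        rw [Finset.card_sdiff_of_subset hCS]
        have h1 : 1 ≤ C.card := Finset.card_pos.2 hCne
        have h2 : C.card ≤ S.card := Finset.card_le_card hCS
        omega
      obtain ⟨i, hiQ, hbest⟩ := ih (S \ C) Q hcard hQsub hQ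
      refine ⟨i, hiQ, fun j hj => ?_⟩
      rw [TTCaux_succ, if_neg (Finset.mem_sdiff.1 (hQsub hiQ)).2]
      exact hbest j hj
    · obtain ⟨hiQ, hiC⟩ := Finset.mem_inter.1 hi
      refine ⟨i, hiQ, fun j hj => ?_⟩
      rw [TTCaux_succ, if_pos hiC]
      rcases (point_spec w _ (hp i).1 (hp i).2 hSne i).2 j (hQS hj) with rfl | hpj
      · exact Or.inl rfl
      · exact Or.inr hpj

lemma tieBroken_good (w : Fin n ≃ H) (R : Fin n → WeakOrder H)
    (tb : Fin n → Fin n → Fin n → Prop) (htb : ∀ i, IsTieBreak (tb i)) :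
    GoodPref (fun i => tieBroken w (R i) (tb i)) := by
  intro i
  obtain ⟨ltot, ltr, lirr⟩ := htb i
  constructor
  · intro a b hab
    rcases (R i).total a b with h1 | h1
    · by_cases h2 : (R i).rel b a
      · have hw : w.symm a ≠ w.symm b := fun h => hab (by
          have := congrArg w h; simpa using this)
        rcases ltot _ _ hw with hl | hl
        · exact Or.inl (Or.inr ⟨⟨h1, h2⟩, hl⟩)
        · exact Or.inr (Or.inr ⟨⟨h2, h1⟩, hl⟩)
      · exact Or.inl (Or.inl ⟨h1, h2⟩)
    · by_cases h2 : (R i).rel a b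
      · have hw : w.symm a ≠ w.symm b := fun h => hab (by
          have := congrArg w h; simpa using this)
        rcases ltot _ _ hw with hl | hl
        · exact Or.inl (Or.inr ⟨⟨h2, h1⟩, hl⟩)
        · exact Or.inr (Or.inr ⟨⟨h1, h2⟩, hl⟩)
      · exact Or.inr (Or.inl ⟨h1, h2⟩)
  · rintro a b c (⟨h1, h2⟩ | ⟨⟨h1, h2⟩, hl1⟩) (⟨h3, h4⟩ | ⟨⟨h3, h4⟩, hl2⟩)
    · exact Or.inl ⟨(R i).trans _ _ _ h1 h3, fun h => h2 ((R i).trans _ _ _ h3 h)⟩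
    · exact Or.inl ⟨(R i).trans _ _ _ h1 h3, fun h => h2 ((R i).trans _ _ _ h3 h)⟩
    · exact Or.inl ⟨(R i).trans _ _ _ h1 h3, fun h => h4 ((R i).trans _ _ _ h h1)⟩
    · exact Or.inr ⟨⟨(R i).trans _ _ _ h1 h3, (R i).trans _ _ _ h4 h2⟩, ltr hl1 hl2⟩

lemma tieBroken_irrefl (w : Fin n ≃ H) (R : Fin n → WeakOrder H)
    (tb : Fin n → Fin n → Fin n → Prop) (htb : ∀ i, IsTieBreak (tb i)) (i : Fin n) (a : H) :
    ¬ tieBroken w (R i) (tb i) a a := by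
  rintro (⟨h1, h2⟩ | ⟨_, hl⟩)
  · exact h2 h1
  · exact (htb i).2.2 _ hl

end Proof

/-- for any market and tie-breaking profile, `TTC_≻(R)` is in the weak
core; in particular the weak core is non-empty. -/
theorem TTCtb_in_weakCore {n : ℕ} {H : Type*} (w : Fin n ≃ H)
    (R : Fin n → WeakOrder H) (tb : Fin n → Fin n → Fin n → Prop)
    (htb : ∀ i, IsTieBreak (tb i)) :
    (Function.Bijective (TTCtb w R tb) ∧ ¬ WeaklyBlocks w R (TTCtb w R tb)) ∧
    ∃ x : Fin n ≃ H, ¬ WeaklyBlocks w R ⇑x := by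
  classical
  have hp : GoodPref (fun i => tieBroken w (R i) (tb i)) := tieBroken_good w R tb htb
  set pref := fun i => tieBroken w (R i) (tb i) with hpref
  have hxdef : TTCtb w R tb = TTCaux w pref n Finset.univ := rfl
  have hcard : (Finset.univ : Finset (Fin n)).card ≤ n := by simp
  have himg : Finset.univ.image (TTCtb w R tb) = Finset.univ.image (⇑w) := by
    rw [hxdef]; exact TTCaux_image w hp n Finset.univ hcard
  have hinj : Function.Injective (TTCtb w R tb) := by
    have hcardimg : (Finset.univ.image (TTCtb w R tb)).card
        = (Finset.univ : Finset (Fin n)).card := by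
      rw [himg, Finset.card_image_of_injective _ w.injective]
    have h2 := Finset.card_image_iff.1 hcardimg
    rw [Finset.coe_univ] at h2
    exact Set.injOn_univ.1 h2
  have hsurj : Function.Surjective (TTCtb w R tb) := by
    intro h
    have hmem : h ∈ Finset.univ.image (⇑w) :=
      Finset.mem_image.2 ⟨w.symm h, Finset.mem_univ _, by simp⟩
    rw [← himg] at hmem
    obtain ⟨i, _, hi⟩ := Finset.mem_image.1 hmem
    exact ⟨i, hi⟩
  have hbij : Function.Bijective (TTCtb w R tb) := ⟨hinj, hsurj⟩
  have hnb : ¬ WeaklyBlocks w R (TTCtb w R tb) := by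
    rintro ⟨Q, hQne, y, himgQ, hPall⟩
    obtain ⟨i, hiQ, hbest⟩ :=
      TTCaux_best w hp n Finset.univ Q hcard (Finset.subset_univ Q) hQne
    have hyi : y i ∈ Q.image (⇑w) := himgQ ▸ Finset.mem_image_of_mem _ hiQ
    obtain ⟨j, hjQ, hwj⟩ := Finset.mem_image.1 hyi
    have hPxy : pref i (y i) (TTCaux w pref n Finset.univ i) := by
      rw [← hxdef]
      exact Or.inl (hPall i hiQ)
    rcases hbest j hjQ with heq | hlt
    · rw [heq, hwj] at hPxy
      exact tieBroken_irrefl w R tb htb i _ hPxy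
    · rw [hwj] at hlt
      exact tieBroken_irrefl w R tb htb i _ ((hp i).2 hPxy hlt)
  exact ⟨⟨hbij, hnb⟩, ⟨Equiv.ofBijective _ hbij, hnb⟩⟩

end ShapleyScarf
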